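/- Let X, Y be Hilbert spaces, A : X → Y a bounded linear operator, η > 0, and {g_θ}_{θ∈Θ} a family of functionals on X such that for all θ ∈ Θ: g_θ is convex, coercive and lower-semicontinuous; g_θ(x) ≥ 0 for all x; g_θ(0) ≤ M_g; and the uniform Hölder stability |g_θ(x) − g_{θ'}(x)| ≤ C_g ‖x‖_X² d(θ,θ')^{2α} holds for all x ∈ X, θ,θ' ∈ Θ, with α ∈ (0,1]. Then the Elastic-Net regularizer R_θ(y) = argmin_{x ∈ X} { (1/2)‖Ax − y‖_Y² + g_θ(x) + η‖x‖_X² } satisfies, for all y ∈ Y and θ, θ' ∈ Θ, ‖R_θ(y) − R_{θ'}(y)‖_X² ≤ (C_g/η) ( ‖R_θ(y)‖_X² + ‖R_{θ'}(y)‖_X² ) d(θ,θ')^{2α}; in particular, R_θ(y) is Hölder stable in θ with constant of the form (L_R ‖y‖_Y + L'_R) and exponent α. -/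

import Mathlib

open MeasureTheory Filter

set_option maxHeartbeats 1600000 in
/-- Elastic-Net stability: under the hypotheses of well-posedness and the uniform Hölder
stability `|g_θ(x) − g_{θ'}(x)| ≤ C_g ‖x‖² d(θ,θ')^{2α}` of the penalties, the
Elastic-Net regularizer satisfies
`‖R_θ(y) − R_{θ'}(y)‖² ≤ (C_g/η)(‖R_θ(y)‖² + ‖R_{θ'}(y)‖²) d(θ,θ')^{2α}`; in particular
it is Hölder stable in `θ` with constant of the form `L_R ‖y‖ + L'_R` and exponent `α`. -/
theorem elasticNet_holder_stability
    {X Y Θ : Type*}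
    [NormedAddCommGroup X] [InnerProductSpace ℝ X] [CompleteSpace X]
    [NormedAddCommGroup Y] [InnerProductSpace ℝ Y] [CompleteSpace Y]
    [MetricSpace Θ]
    (A : X →L[ℝ] Y) (η : ℝ) (hη : 0 < η)
    (g : Θ → X → ℝ) (Mg Cg : ℝ) (α : ℝ) (hα : α ∈ Set.Ioc (0 : ℝ) 1)
    (hconv : ∀ θ, ConvexOn ℝ Set.univ (g θ))
    (hcoer : ∀ θ, Tendsto (g θ) (Filter.comap (fun x : X => ‖x‖) atTop) atTop)
    (hlsc : ∀ θ, LowerSemicontinuous (g θ))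
    (hnonneg : ∀ θ x, 0 ≤ g θ x)
    (hzero : ∀ θ, g θ 0 ≤ Mg)
    (hstab : ∀ (x : X) (θ θ' : Θ),
      |g θ x - g θ' x| ≤ Cg * ‖x‖ ^ 2 * dist θ θ' ^ (2 * α))
    -- R θ y is the Elastic-Net minimizer
    (R : Θ → Y → X)
    (hmin : ∀ (θ : Θ) (y : Y) (x : X),
      (1 / 2) * ‖A (R θ y) - y‖ ^ 2 + g θ (R θ y) + η * ‖R θ y‖ ^ 2 ≤
        (1 / 2) * ‖A x - y‖ ^ 2 + g θ x + η * ‖x‖ ^ 2) :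
    (∀ (y : Y) (θ θ' : Θ),
      ‖R θ y - R θ' y‖ ^ 2 ≤
        (Cg / η) * (‖R θ y‖ ^ 2 + ‖R θ' y‖ ^ 2) * dist θ θ' ^ (2 * α)) ∧
      ∃ LR LR' : ℝ, 0 ≤ LR ∧ 0 ≤ LR' ∧
        ∀ (y : Y) (θ θ' : Θ),
          ‖R θ y - R θ' y‖ ≤ (LR * ‖y‖ + LR') * dist θ θ' ^ α := by

  have hd2 : ∀ θ θ' : Θ, dist θ θ' ^ (2 * α) = (dist θ θ' ^ α) ^ 2 := by
    intro θ θ'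
    rw [mul_comm, Real.rpow_mul dist_nonneg, ← Real.rpow_natCast (dist θ θ' ^ α) 2]
    norm_num
  have key : ∀ (y : Y) (θ θ' : Θ),
      η * ‖R θ y - R θ' y‖ ^ 2 ≤
        Cg * (‖R θ y‖ ^ 2 + ‖R θ' y‖ ^ 2) * dist θ θ' ^ (2 * α) := by
    intro y θ θ'
    set u := R θ y with hu
    set v := R θ' y with hv
    set m : X := (2⁻¹ : ℝ) • u + (2⁻¹ : ℝ) • v with hm
    have hgm : ∀ θ'' : Θ, g θ'' m ≤ 2⁻¹ * g θ'' u + 2⁻¹ * g θ'' v := by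
      intro θ''
      have := (hconv θ'').2 (Set.mem_univ u) (Set.mem_univ v)
        (by norm_num : (0:ℝ) ≤ 2⁻¹) (by norm_num : (0:ℝ) ≤ 2⁻¹) (by norm_num)
      simpa [smul_eq_mul] using this
    have hmnorm : ‖m‖ ^ 2 = 4⁻¹ * ‖u + v‖ ^ 2 := by
      have : m = (2⁻¹ : ℝ) • (u + v) := by rw [hm, smul_add]
      rw [this, norm_smul]
      norm_num
      ring
    have hAm : A m - y = (2⁻¹ : ℝ) • ((A u - y) + (A v - y)) := by
      rw [hm, map_add, A.map_smul, A.map_smul]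
      module
    have hAmnorm : ‖A m - y‖ ^ 2 = 4⁻¹ * ‖(A u - y) + (A v - y)‖ ^ 2 := by
      rw [hAm, norm_smul]
      norm_num
      ring
    have P1 := parallelogram_law_with_norm ℝ u v
    have P2 := parallelogram_law_with_norm ℝ (A u - y) (A v - y)
    have h1 := hmin θ y m
    have h2 := hmin θ' y m
    rw [← hu] at h1
    rw [← hv] at h2
    have hs1 := abs_le.mp (hstab v θ θ')
    have hs2 := abs_le.mp (hstab u θ θ')
    have hg1 := hgm θ
    have hg2 := hgm θ'
    have huv : u - v = (u + v) - (v + v) := by abel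
    have e1 : ‖u + v‖ * ‖u + v‖ = ‖u + v‖ ^ 2 := (sq _).symm
    nlinarith [sq_nonneg (‖(A u - y) - (A v - y)‖), sq_nonneg (‖u - v‖),
      sq_abs (‖u+v‖), norm_nonneg (u - v)]
  constructor
  · intro y θ θ'
    have h := key y θ θ'
    rw [div_mul_eq_mul_div, div_mul_eq_mul_div, le_div_iff₀ hη]
    linarith [h]
  · by_cases hΘ : Nonempty Θ
    · obtain ⟨θ₀⟩ := hΘ
      have hMg : 0 ≤ Mg := le_trans (hnonneg θ₀ 0) (hzero θ₀)
      have hb : ∀ (θ : Θ) (y : Y), η * ‖R θ y‖ ^ 2 ≤ 2⁻¹ * ‖y‖ ^ 2 + Mg := by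
        intro θ y
        have h := hmin θ y 0
        simp only [map_zero, zero_sub, norm_neg, norm_zero] at h
        have h1 := hnonneg θ (R θ y)
        have h2 := hzero θ
        nlinarith [sq_nonneg ‖A (R θ y) - y‖]
      set a := max (Cg / (η * η)) 0 with ha
      set b := max (2 * Mg * Cg / (η * η)) 0 with hbdef
      have ha0 : 0 ≤ a := le_max_right _ _
      have hb0 : 0 ≤ b := le_max_right _ _
      refine ⟨Real.sqrt a, Real.sqrt b, Real.sqrt_nonneg _, Real.sqrt_nonneg _, ?_⟩
      intro y θ θ'
      have hsq : ‖R θ y - R θ' y‖ ^ 2 ≤ (a * ‖y‖ ^ 2 + b) * (dist θ θ' ^ α) ^ 2 := by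
        have h := key y θ θ'
        rw [hd2] at h
        have hS : ‖R θ y‖ ^ 2 + ‖R θ' y‖ ^ 2 ≤ (‖y‖ ^ 2 + 2 * Mg) / η := by
          have b1 := hb θ y
          have b2 := hb θ' y
          rw [le_div_iff₀ hη]
          linarith
        have hdn : (0:ℝ) ≤ (dist θ θ' ^ α) ^ 2 := sq_nonneg _
        rcases le_or_gt 0 Cg with hC | hC
        · have h2 : Cg * (‖R θ y‖ ^ 2 + ‖R θ' y‖ ^ 2) ≤ Cg * ((‖y‖ ^ 2 + 2 * Mg) / η) :=
            mul_le_mul_of_nonneg_left hS hC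
          have h3 : Cg * ((‖y‖ ^ 2 + 2 * Mg) / η) / η ≤ a * ‖y‖ ^ 2 + b := by
            have hA : Cg / (η * η) ≤ a := le_max_left _ _
            have hB : 2 * Mg * Cg / (η * η) ≤ b := le_max_left _ _
            have : Cg * ((‖y‖ ^ 2 + 2 * Mg) / η) / η
                = (Cg / (η * η)) * ‖y‖ ^ 2 + 2 * Mg * Cg / (η * η) := by
              field_simp
            rw [this]
            have := mul_le_mul_of_nonneg_right hA (sq_nonneg ‖y‖)
            linarith
          have h4 : ‖R θ y - R θ' y‖ ^ 2 ≤
              (Cg * ((‖y‖ ^ 2 + 2 * Mg) / η) / η) * (dist θ θ' ^ α) ^ 2 := by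
            have : Cg * (‖R θ y‖ ^ 2 + ‖R θ' y‖ ^ 2) * (dist θ θ' ^ α) ^ 2 ≤
                Cg * ((‖y‖ ^ 2 + 2 * Mg) / η) * (dist θ θ' ^ α) ^ 2 :=
              mul_le_mul_of_nonneg_right h2 hdn
            rw [div_mul_eq_mul_div, le_div_iff₀ hη]
            nlinarith
          calc ‖R θ y - R θ' y‖ ^ 2 ≤ (Cg * ((‖y‖ ^ 2 + 2 * Mg) / η) / η) * (dist θ θ' ^ α) ^ 2 := h4
            _ ≤ (a * ‖y‖ ^ 2 + b) * (dist θ θ' ^ α) ^ 2 :=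
              mul_le_mul_of_nonneg_right h3 hdn
        · have hCle : Cg * (‖R θ y‖ ^ 2 + ‖R θ' y‖ ^ 2) ≤ 0 :=
            mul_nonpos_of_nonpos_of_nonneg hC.le (by positivity)
          have : Cg * (‖R θ y‖ ^ 2 + ‖R θ' y‖ ^ 2) * (dist θ θ' ^ α) ^ 2 ≤ 0 :=
            mul_nonpos_of_nonpos_of_nonneg hCle hdn
          have hR : (0:ℝ) ≤ (a * ‖y‖ ^ 2 + b) * (dist θ θ' ^ α) ^ 2 := by positivity
          nlinarith
      have hd0 : 0 ≤ dist θ θ' ^ α := Real.rpow_nonneg dist_nonneg _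
      have hfin : (a * ‖y‖ ^ 2 + b) ≤ (Real.sqrt a * ‖y‖ + Real.sqrt b) ^ 2 := by
        have e1 : Real.sqrt a ^ 2 = a := Real.sq_sqrt ha0
        have e2 : Real.sqrt b ^ 2 = b := Real.sq_sqrt hb0
        nlinarith [mul_nonneg (mul_nonneg (Real.sqrt_nonneg a) (Real.sqrt_nonneg b)) (norm_nonneg y)]
      have hrhs0 : 0 ≤ Real.sqrt a * ‖y‖ + Real.sqrt b := by positivity
      have : ‖R θ y - R θ' y‖ ^ 2 ≤ ((Real.sqrt a * ‖y‖ + Real.sqrt b) * dist θ θ' ^ α) ^ 2 := by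
        calc ‖R θ y - R θ' y‖ ^ 2 ≤ (a * ‖y‖ ^ 2 + b) * (dist θ θ' ^ α) ^ 2 := hsq
          _ ≤ (Real.sqrt a * ‖y‖ + Real.sqrt b) ^ 2 * (dist θ θ' ^ α) ^ 2 :=
            mul_le_mul_of_nonneg_right hfin (sq_nonneg _)
          _ = _ := by ring
      have hfinal := Real.sqrt_le_sqrt this
      rw [Real.sqrt_sq (norm_nonneg _), Real.sqrt_sq (mul_nonneg hrhs0 hd0)] at hfinal
      exact hfinal
    · exact ⟨0, 0, le_refl 0, le_refl 0, fun y θ => absurd ⟨θ⟩ hΘ⟩
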